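/- Let M be the star with countably many branches, with metric d₁([x,m],[y,n]) = |x − y|/m if m = n and x/m + y/n otherwise, let 0 ∈ M be the class of (0,1), and define f : M → ℝ by f([x,n]) = x. Then f is not continuous at 0 with respect to d₁: the sequence ([1, p])_{p ≥ 1} converges to 0 in (M, d₁) (since d₁([1,p], 0) = 1/p → 0), while f([1, p]) = 1 for all p does not converge to f(0) = 0. Hence on the compact geodesic space (M, d₁) there exists a geodesically convex real-valued function that is not continuous. -/

import Mathlib

/-- Points of `[0,1] × ℕ≥1`: countably many copies of the unit interval. -/
abbrev StarPoint : Type := Set.Icc (0:ℝ) 1 × {n : ℕ // 1 ≤ n}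

/-- The gluing relation: `(x,m) ∼ (y,n) ↔ (x = y = 0) ∨ (x = y ∧ m = n)`. -/
def starSetoid : Setoid StarPoint where
  r a b := (a.1.1 = 0 ∧ b.1.1 = 0) ∨ (a.1.1 = b.1.1 ∧ a.2 = b.2)
  iseqv := by
    constructor
    · intro a; exact Or.inr ⟨rfl, rfl⟩
    · rintro a b (⟨h1, h2⟩ | ⟨h1, h2⟩)
      · exact Or.inl ⟨h2, h1⟩
      · exact Or.inr ⟨h1.symm, h2.symm⟩
    · rintro a b c (⟨h1, h2⟩ | ⟨h1, h2⟩) (⟨g1, g2⟩ | ⟨g1, g2⟩)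
      · exact Or.inl ⟨h1, g2⟩
      · exact Or.inl ⟨h1, g1 ▸ h2⟩
      · exact Or.inl ⟨h1.trans g1, g2⟩
      · exact Or.inr ⟨h1.trans g1, h2.trans g2⟩

/-- The star with countably many branches: the quotient of `[0,1] × ℕ≥1` gluing all the
origins together. -/
def StarSpace : Type := Quotient starSetoid

/-- The distance `d₁((x,m),(y,n)) = |x-y|/m` if `m = n`, and `x/m + y/n` otherwise. -/
noncomputable def d1 (a b : StarPoint) : ℝ :=
  if a.2 = b.2 then |a.1.1 - b.1.1| / (a.2.1 : ℝ)
  else a.1.1 / (a.2.1 : ℝ) + b.1.1 / (b.2.1 : ℝ)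

lemma d1_self (a : StarPoint) : d1 a a = 0 := by
  unfold d1; rw [if_pos rfl, sub_self, abs_zero, zero_div]

lemma d1_comm (a b : StarPoint) : d1 a b = d1 b a := by
  unfold d1
  rcases eq_or_ne a.2 b.2 with h | h
  · rw [if_pos h, if_pos h.symm, abs_sub_comm, h]
  · rw [if_neg h, if_neg (Ne.symm h), add_comm]

lemma d1_triangle (a b c : StarPoint) : d1 a c ≤ d1 a b + d1 b c := by
  obtain ⟨⟨x, hx0, hx1⟩, m⟩ := a
  obtain ⟨⟨y, hy0, hy1⟩, n⟩ := b
  obtain ⟨⟨z, hz0, hz1⟩, k⟩ := c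
  have hm : (0:ℝ) < (m.1 : ℝ) := by exact_mod_cast m.2
  have hn : (0:ℝ) < (n.1 : ℝ) := by exact_mod_cast n.2
  have hk : (0:ℝ) < (k.1 : ℝ) := by exact_mod_cast k.2
  unfold d1
  dsimp only
  rcases eq_or_ne m n with hmn | hmn <;> rcases eq_or_ne n k with hnk | hnk
  · subst hmn; subst hnk
    rw [if_pos rfl, if_pos rfl, if_pos rfl, ← add_div]
    gcongr
    exact abs_sub_le x y z
  · subst hmn
    rw [if_neg hnk, if_pos rfl, if_neg hnk]
    have h1 : x / (m.1:ℝ) ≤ (|x - y| + y) / (m.1:ℝ) := by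
      gcongr
      have := le_abs_self (x - y); linarith
    rw [add_div] at h1
    linarith
  · subst hnk
    rw [if_neg hmn, if_neg hmn, if_pos rfl]
    have h1 : z / (n.1:ℝ) ≤ (|y - z| + y) / (n.1:ℝ) := by
      gcongr
      have := le_abs_self (z - y); rw [abs_sub_comm] at this; linarith
    rw [add_div] at h1
    linarith
  · have hyn : 0 ≤ y / (n.1:ℝ) := div_nonneg hy0 hn.le
    rcases eq_or_ne m k with hmk | hmk
    · subst hmk
      rw [if_pos rfl, if_neg hmn, if_neg hnk]
      have h0 : |x - z| ≤ x + z := by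
        rw [abs_sub_le_iff]; constructor <;> linarith
      have h1 : |x - z| / (m.1:ℝ) ≤ (x + z) / (m.1:ℝ) := by gcongr
      rw [add_div] at h1
      linarith
    · rw [if_neg hmk, if_neg hmn, if_neg hnk]
      linarith

lemma d1_rel_of_eq_zero {a b : StarPoint} (h : d1 a b = 0) : starSetoid.r a b := by
  have hm : (0:ℝ) < (a.2.1 : ℝ) := by exact_mod_cast a.2.2
  have hn : (0:ℝ) < (b.2.1 : ℝ) := by exact_mod_cast b.2.2
  unfold d1 at h
  split_ifs at h with hab
  · refine Or.inr ⟨?_, hab⟩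
    have := div_eq_zero_iff.mp h
    rcases this with h' | h'
    · have : a.1.1 - b.1.1 = 0 := abs_eq_zero.mp h'
      linarith
    · exact absurd h' hm.ne'
  · have h1 : 0 ≤ a.1.1 / (a.2.1 : ℝ) := div_nonneg a.1.2.1 hm.le
    have h2 : 0 ≤ b.1.1 / (b.2.1 : ℝ) := div_nonneg b.1.2.1 hn.le
    have ha : a.1.1 / (a.2.1 : ℝ) = 0 := by linarith
    have hb : b.1.1 / (b.2.1 : ℝ) = 0 := by linarith
    refine Or.inl ⟨?_, ?_⟩
    · rcases div_eq_zero_iff.mp ha with h' | h'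
      · exact h'
      · exact absurd h' hm.ne'
    · rcases div_eq_zero_iff.mp hb with h' | h'
      · exact h'
      · exact absurd h' hn.ne'

lemma d1_of_fst_eq_zero {a : StarPoint} (b : StarPoint) (ha : a.1.1 = 0) :
    d1 a b = b.1.1 / (b.2.1 : ℝ) := by
  unfold d1
  split_ifs with h
  · rw [ha, h, zero_sub, abs_neg, abs_of_nonneg b.1.2.1]
  · rw [ha, zero_div, zero_add]

lemma d1_congr_left {a₁ a₂ : StarPoint} (b : StarPoint) (h : starSetoid.r a₁ a₂) :
    d1 a₁ b = d1 a₂ b := by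
  rcases h with ⟨h1, h2⟩ | ⟨h1, h2⟩
  · rw [d1_of_fst_eq_zero b h1, d1_of_fst_eq_zero b h2]
  · have : a₁ = a₂ := Prod.ext (Subtype.ext h1) h2
    rw [this]

/-- `d₁` descends to the quotient. -/
noncomputable def starDist1 : StarSpace → StarSpace → ℝ :=
  Quotient.lift₂ d1 (fun a₁ b₁ a₂ b₂ ha hb => by
    calc d1 a₁ b₁ = d1 a₂ b₁ := d1_congr_left b₁ ha
    _ = d1 b₁ a₂ := d1_comm _ _
    _ = d1 b₂ a₂ := d1_congr_left a₂ hb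
    _ = d1 a₂ b₂ := d1_comm _ _)

/-- The star with countably many branches, as a metric space for `d₁`. -/
noncomputable instance StarSpace.metricSpace : MetricSpace StarSpace where
  dist := starDist1
  dist_self := by
    rintro ⟨a⟩; exact d1_self a
  dist_comm := by
    rintro ⟨a⟩ ⟨b⟩; exact d1_comm a b
  dist_triangle := by
    rintro ⟨a⟩ ⟨b⟩ ⟨c⟩; exact d1_triangle a b c
  eq_of_dist_eq_zero := by
    rintro ⟨a⟩ ⟨b⟩ h
    exact Quotient.sound (d1_rel_of_eq_zero h)

/-- The class of a point of `[0,1] × ℕ≥1` in the star. -/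
def StarSpace.mk (a : StarPoint) : StarSpace := Quotient.mk starSetoid a

lemma StarSpace.dist_mk (a b : StarPoint) :
    dist (StarSpace.mk a) (StarSpace.mk b) = d1 a b := rfl

/-- The origin of the star: the common class of the points `(0, n)`. -/
def StarSpace.origin : StarSpace := StarSpace.mk (⟨0, by norm_num⟩, ⟨1, le_refl 1⟩)

/-- A geodesic from `p` to `q` in a metric space, parametrized by `[0,1]`
(proportionally to arclength). -/
def IsGeodesic {X : Type*} [MetricSpace X] (p q : X) (γ : Set.Icc (0:ℝ) 1 → X) : Prop :=
  γ ⟨0, by norm_num⟩ = p ∧ γ ⟨1, by norm_num⟩ = q ∧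
    ∀ s t : Set.Icc (0:ℝ) 1, dist (γ s) (γ t) = |(s:ℝ) - (t:ℝ)| * dist p q

/-- Geodesic convexity for a real-valued function on a metric space. -/
def GeodesicallyConvexReal {X : Type*} [MetricSpace X] (f : X → ℝ) : Prop :=
  ∀ (p q : X) (γ : Set.Icc (0:ℝ) 1 → X), IsGeodesic p q γ →
    ∀ t : Set.Icc (0:ℝ) 1, f (γ t) ≤ (1 - (t:ℝ)) * f p + (t:ℝ) * f q

/-- The height function `f [x, n] = x`, well-defined on the quotient. -/
def starF : StarSpace → ℝ :=
  Quotient.lift (fun a : StarPoint => a.1.1) (by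
    rintro a b (⟨h1, h2⟩ | ⟨h1, h2⟩) <;> try dsimp only
    · rw [h1, h2]
    · exact h1)

/-- The sequence `[1, p+1]`, `p = 0, 1, 2, …`: the tips of the branches. -/
def starTip (p : ℕ) : StarSpace :=
  StarSpace.mk (⟨1, by norm_num⟩, ⟨p + 1, by omega⟩)

set_option maxHeartbeats 1000000 in
lemma between_starF {a b c : StarPoint} {t : ℝ} (ht0 : 0 ≤ t) (ht1 : t ≤ 1)
    (h1 : d1 a c = t * d1 a b) (h2 : d1 c b = (1 - t) * d1 a b) :
    c.1.1 ≤ (1 - t) * a.1.1 + t * b.1.1 := by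
  obtain ⟨⟨x, hx0, hx1⟩, m⟩ := a
  obtain ⟨⟨y, hy0, hy1⟩, n⟩ := b
  obtain ⟨⟨u, hu0, hu1⟩, k⟩ := c
  have hm : (0:ℝ) < (m.1 : ℝ) := by exact_mod_cast m.2
  have hn : (0:ℝ) < (n.1 : ℝ) := by exact_mod_cast n.2
  have hk : (0:ℝ) < (k.1 : ℝ) := by exact_mod_cast k.2
  unfold d1 at h1 h2
  dsimp only at h1 h2 ⊢
  split_ifs at h1 h2 with hac hab hcb hcb hab hcb hcb
  · -- m = k, m = n, k = n : all same branch
    rw [← hac] at h2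
    have e1 : |x - u| = t * |x - y| := by
      field_simp at h1; linarith
    have e2 : |u - y| = (1 - t) * |x - y| := by
      field_simp at h2; linarith
    rcases abs_cases (x - u) with ⟨f1, _⟩ | ⟨f1, _⟩ <;>
      rcases abs_cases (u - y) with ⟨f2, _⟩ | ⟨f2, _⟩ <;>
      rcases abs_cases (x - y) with ⟨f3, _⟩ | ⟨f3, _⟩ <;>
      nlinarith
  · exact absurd (hac.symm.trans hab) hcb
  · exact absurd (hac.trans hcb) hab
  · -- m = k, m ≠ n : z on branch of p
    rw [← hac] at h2
    -- h2 : u/m + y/n = (1-t)*(x/m+y/n)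
    field_simp at h2
    nlinarith [mul_nonneg (mul_nonneg ht0 hy0) hm.le,
      mul_nonneg (mul_nonneg ht0 hy0) hn.le, mul_pos hm hn]
  · exact absurd (hab.trans hcb.symm) hac
  · -- m ≠ k, m = n, k ≠ n : z off the common branch
    rw [← hab] at h2
    -- h1 : x/m + u/k = t * (|x-y|/m), h2 : u/k + y/m = (1-t)*(|x-y|/m)
    have habs : |x - y| ≤ x + y := by
      rcases abs_cases (x - y) with ⟨f, _⟩ | ⟨f, _⟩ <;> linarith
    have hd : |x - y| / (m.1:ℝ) ≤ (x + y) / (m.1:ℝ) := by gcongr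
    rw [add_div] at hd
    have hu' : u / (k.1:ℝ) ≤ 0 := by linarith
    have : u ≤ 0 := by
      by_contra h
      exact absurd (div_pos (lt_of_not_ge h) hk) (not_lt.mpr hu')
    nlinarith
  · -- m ≠ k, m ≠ n, k = n : z on branch of q
    rw [hcb] at h1
    -- h1 : x/m + u/n = t*(x/m + y/n)
    field_simp at h1
    nlinarith [mul_nonneg (mul_nonneg (sub_nonneg.mpr ht1) hx0) hn.le,
      mul_nonneg (mul_nonneg (sub_nonneg.mpr ht1) hx0) hm.le, mul_pos hm hn]
  · -- all branches distinct
    have : u / (k.1:ℝ) = 0 := by nlinarith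
    have hu' : u = 0 := by
      rcases div_eq_zero_iff.mp this with h | h
      · exact h
      · exact absurd h hk.ne'
    nlinarith

/-- Geodesic through the origin between branches, evaluated at `t`. -/
noncomputable def geo2 (x y : ℝ) (hx : x ∈ Set.Icc (0:ℝ) 1) (hy : y ∈ Set.Icc (0:ℝ) 1)
    (m n : {n : ℕ // 1 ≤ n}) (t : Set.Icc (0:ℝ) 1) : StarSpace :=
  if h : t.1 * (x/(m.1:ℝ) + y/(n.1:ℝ)) ≤ x/(m.1:ℝ) then
    StarSpace.mk ⟨⟨x - t.1 * (x/(m.1:ℝ) + y/(n.1:ℝ)) * (m.1:ℝ), by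
      have hm : (0:ℝ) < (m.1:ℝ) := by exact_mod_cast m.2
      have hn : (0:ℝ) < (n.1:ℝ) := by exact_mod_cast n.2
      constructor
      · nlinarith [(le_div_iff₀ hm).mp h]
      · nlinarith [hx.2, mul_nonneg (mul_nonneg t.2.1
          (add_nonneg (div_nonneg hx.1 hm.le) (div_nonneg hy.1 hn.le))) hm.le]⟩, m⟩
  else
    StarSpace.mk ⟨⟨(t.1 * (x/(m.1:ℝ) + y/(n.1:ℝ)) - x/(m.1:ℝ)) * (n.1:ℝ), by
      have hm : (0:ℝ) < (m.1:ℝ) := by exact_mod_cast m.2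
      have hn : (0:ℝ) < (n.1:ℝ) := by exact_mod_cast n.2
      constructor
      · exact mul_nonneg (by linarith [not_le.mp h]) hn.le
      · have h1 : t.1 * (x/(m.1:ℝ) + y/(n.1:ℝ)) ≤ x/(m.1:ℝ) + y/(n.1:ℝ) := by
          nlinarith [t.2.2, add_nonneg (div_nonneg hx.1 hm.le) (div_nonneg hy.1 hn.le)]
        have h2 : (t.1 * (x/(m.1:ℝ) + y/(n.1:ℝ)) - x/(m.1:ℝ)) * (n.1:ℝ)
            ≤ (y/(n.1:ℝ)) * (n.1:ℝ) := by
          apply mul_le_mul_of_nonneg_right _ hn.le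
          linarith
        rw [div_mul_cancel₀ _ hn.ne'] at h2
        linarith [hy.2]⟩, n⟩

lemma exists_geodesic_mk (a b : StarPoint) :
    ∃ γ : Set.Icc (0:ℝ) 1 → StarSpace,
      IsGeodesic (StarSpace.mk a) (StarSpace.mk b) γ := by
  obtain ⟨⟨x, hx0, hx1⟩, m⟩ := a
  obtain ⟨⟨y, hy0, hy1⟩, n⟩ := b
  have hm : (0:ℝ) < (m.1:ℝ) := by exact_mod_cast m.2
  have hn : (0:ℝ) < (n.1:ℝ) := by exact_mod_cast n.2
  rcases eq_or_ne m n with hmn | hmn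
  · -- same branch: straight segment
    subst hmn
    refine ⟨fun t => StarSpace.mk ⟨⟨x + t.1 * (y - x), by
        constructor
        · nlinarith [t.2.1, t.2.2]
        · nlinarith [t.2.1, t.2.2]⟩, m⟩, ?_, ?_, ?_⟩
    · exact congrArg _ (Prod.ext (Subtype.ext (by norm_num)) rfl)
    · exact congrArg _ (Prod.ext (Subtype.ext (by norm_num)) rfl)
    · intro s t
      simp only [StarSpace.dist_mk]
      unfold d1
      rw [if_pos rfl, if_pos rfl]
      dsimp only
      rw [show (x + s.1*(y-x)) - (x + t.1*(y-x)) = (s.1-t.1)*(y-x) by ring, abs_mul,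
        abs_sub_comm y x, mul_div_assoc]
  · -- different branches: through the origin
    set d := x/(m.1:ℝ) + y/(n.1:ℝ) with hdd
    have hd0 : (0:ℝ) ≤ d := add_nonneg (div_nonneg hx0 hm.le) (div_nonneg hy0 hn.le)
    have hdist : dist (StarSpace.mk (⟨⟨x,hx0,hx1⟩,m⟩ : StarPoint))
        (StarSpace.mk (⟨⟨y,hy0,hy1⟩,n⟩ : StarPoint)) = d := by
      rw [StarSpace.dist_mk]
      unfold d1
      rw [if_neg hmn]
    refine ⟨geo2 x y ⟨hx0, hx1⟩ ⟨hy0, hy1⟩ m n, ?_, ?_, ?_⟩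
    · show geo2 x y _ _ m n ⟨0, _⟩ = _
      unfold geo2
      rw [dif_pos (by simpa using div_nonneg hx0 hm.le)]
      exact congrArg _ (Prod.ext (Subtype.ext (by norm_num)) rfl)
    · show geo2 x y _ _ m n ⟨1, _⟩ = _
      unfold geo2
      by_cases hy : y = 0
      · rw [dif_pos (by simp only [Set.Icc.coe_one, one_mul, hy, zero_div, add_zero, le_refl])]
        refine Quotient.sound (Or.inl ⟨?_, hy⟩)
        dsimp only
        rw [hy]
        field_simp
        ring
      · rw [dif_neg (by
          intro hcon
          simp only [Set.Icc.coe_one, one_mul] at hcon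
          have h1 : y / (n.1:ℝ) ≤ 0 := by linarith
          have h2 : (0:ℝ) < y / (n.1:ℝ) := div_pos (lt_of_le_of_ne hy0 (Ne.symm hy)) hn
          linarith)]
        exact congrArg _ (Prod.ext (Subtype.ext (by
          show (1 * (x/(m.1:ℝ) + y/(n.1:ℝ)) - x/(m.1:ℝ)) * (n.1:ℝ) = y
          field_simp
          ring)) rfl)
    · -- distances
      have key : ∀ s t : Set.Icc (0:ℝ) 1, s.1 ≤ t.1 →
          dist (geo2 x y ⟨hx0,hx1⟩ ⟨hy0,hy1⟩ m n s) (geo2 x y ⟨hx0,hx1⟩ ⟨hy0,hy1⟩ m n t)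
            = (t.1 - s.1) * d := by
        intro s t hst
        have hsd : s.1 * d ≤ t.1 * d := mul_le_mul_of_nonneg_right hst hd0
        unfold geo2
        by_cases ht : t.1 * d ≤ x/(m.1:ℝ)
        · have hs : s.1 * d ≤ x/(m.1:ℝ) := le_trans hsd ht
          rw [dif_pos hs, dif_pos ht, StarSpace.dist_mk]
          unfold d1
          rw [if_pos rfl]
          dsimp only
          rw [show (x - s.1*d*m.1) - (x - t.1*d*m.1) = ((t.1 - s.1)*d)*(m.1:ℝ) by ring,
            abs_mul, abs_of_nonneg (by nlinarith : (0:ℝ) ≤ (t.1 - s.1)*d),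
            abs_of_nonneg hm.le, mul_div_cancel_right₀ _ hm.ne']
        · by_cases hs : s.1 * d ≤ x/(m.1:ℝ)
          · rw [dif_pos hs, dif_neg ht, StarSpace.dist_mk]
            unfold d1
            rw [if_neg hmn]
            dsimp only
            rw [sub_div, mul_div_cancel_right₀ _ hm.ne', mul_div_cancel_right₀ _ hn.ne']
            ring
          · rw [dif_neg hs, dif_neg ht, StarSpace.dist_mk]
            unfold d1
            rw [if_pos rfl]
            dsimp only
            rw [show (s.1*d - x/(m.1:ℝ))*n.1 - (t.1*d - x/(m.1:ℝ))*n.1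
                = -(((t.1 - s.1)*d)*(n.1:ℝ)) by ring, abs_neg,
              abs_mul, abs_of_nonneg (by nlinarith : (0:ℝ) ≤ (t.1 - s.1)*d),
              abs_of_nonneg hn.le, mul_div_cancel_right₀ _ hn.ne']
      intro s t
      rw [hdist]
      rcases le_total s.1 t.1 with h | h
      · rw [key s t h, abs_of_nonpos (by linarith : s.1 - t.1 ≤ 0)]
        try ring
      · rw [dist_comm, key t s h, abs_of_nonneg (by linarith : (0:ℝ) ≤ s.1 - t.1)]
        try ring

lemma dist_mk_origin (a : StarPoint) :
    dist (StarSpace.mk a) StarSpace.origin = a.1.1 / (a.2.1:ℝ) := by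
  rw [StarSpace.origin, StarSpace.dist_mk, d1_comm]
  exact d1_of_fst_eq_zero a rfl

instance StarSpace.instCompact : CompactSpace StarSpace := by
  rw [compactSpace_iff_seqCompactSpace]
  refine ⟨fun {u} _ => ?_⟩
  set a : ℕ → StarPoint := fun p => (u p).out with ha
  have hu : ∀ p, u p = StarSpace.mk (a p) := fun p => ((u p).out_eq).symm
  by_cases hcase : ∃ k, {p | (a p).2 = k}.Infinite
  · obtain ⟨k, hk⟩ := hcase
    obtain ⟨φ, hφ, hφk⟩ := Filter.extraction_of_frequently_atTop
      (Nat.frequently_atTop_iff_infinite.mpr hk)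
    obtain ⟨l, hl, ψ, hψ, hlim⟩ := isCompact_Icc.tendsto_subseq
      (x := fun p => (a (φ p)).1.1) (fun p => (a (φ p)).1.2)
    refine ⟨StarSpace.mk ⟨⟨l, hl⟩, k⟩, trivial, φ ∘ ψ, hφ.comp hψ, ?_⟩
    rw [tendsto_iff_dist_tendsto_zero]
    have heq : ∀ p, dist (u ((φ ∘ ψ) p)) (StarSpace.mk (⟨⟨l,hl⟩,k⟩ : StarPoint))
        = |(a (φ (ψ p))).1.1 - l| / (k.1:ℝ) := by
      intro p
      rw [Function.comp_apply, hu, StarSpace.dist_mk]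
      unfold d1
      rw [hφk (ψ p)]
      rw [if_pos rfl]
    have hbound : ∀ p, dist (u ((φ ∘ ψ) p)) (StarSpace.mk (⟨⟨l,hl⟩,k⟩ : StarPoint))
        ≤ |(a (φ (ψ p))).1.1 - l| := by
      intro p
      rw [heq p]
      exact div_le_self (abs_nonneg _) (by exact_mod_cast k.2)
    apply squeeze_zero (fun p => dist_nonneg) hbound
    have := (hlim.sub (tendsto_const_nhds (x := l))).abs
    simpa using this
  · push_neg at hcase
    have hfin : ∀ k, {p | (a p).2 = k}.Finite := fun k => hcase k
    refine ⟨StarSpace.origin, trivial, id, strictMono_id, ?_⟩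
    rw [tendsto_iff_dist_tendsto_zero]
    have hb : ∀ p, dist (u p) StarSpace.origin ≤ (((a p).2.1:ℝ))⁻¹ := by
      intro p
      rw [hu, dist_mk_origin, div_eq_mul_inv]
      exact mul_le_of_le_one_left (by positivity) (a p).1.2.2
    apply squeeze_zero (fun p => dist_nonneg) (fun p => hb p)
    have hg : Filter.Tendsto (fun p => (a p).2) Filter.cofinite Filter.cofinite := by
      intro s hs
      rw [Filter.mem_map, Filter.mem_cofinite]
      rw [← Set.preimage_compl]
      refine Set.Finite.subset (hs.biUnion (fun k _ => hfin k)) ?_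
      intro p hp
      simp only [Set.mem_iUnion, Set.mem_preimage, Set.mem_compl_iff] at *
      exact ⟨(a p).2, hp, rfl⟩
    have h2 : Filter.Tendsto (fun p => ((a p).2.1 : ℕ)) Filter.atTop Filter.atTop := by
      rw [← Nat.cofinite_eq_atTop]
      exact Subtype.val_injective.tendsto_cofinite.comp hg
    exact tendsto_inv_atTop_zero.comp (tendsto_natCast_atTop_atTop.comp h2)

lemma starF_between (p q z : StarSpace) {t : ℝ} (ht0 : 0 ≤ t) (ht1 : t ≤ 1)
    (h1 : dist p z = t * dist p q) (h2 : dist z q = (1-t) * dist p q) :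
    starF z ≤ (1-t) * starF p + t * starF q := by
  induction p, q, z using Quotient.inductionOn₃ with
  | h a b c => exact between_starF ht0 ht1 h1 h2

lemma starF_geodesicallyConvex : GeodesicallyConvexReal starF := by
  intro p q γ hγ t
  obtain ⟨h0, h1, hd⟩ := hγ
  have e1 : dist p (γ t) = t.1 * dist p q := by
    rw [← h0, hd, show ((⟨0, by norm_num⟩ : Set.Icc (0:ℝ) 1) : ℝ) - t.1 = -(t.1) by norm_num,
      abs_neg, abs_of_nonneg t.2.1, h0]
  have e2 : dist (γ t) q = (1 - t.1) * dist p q := by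
    conv_lhs => rw [← h1]
    rw [hd, show (t.1:ℝ) - ((⟨1, by norm_num⟩ : Set.Icc (0:ℝ) 1) : ℝ) = -(1 - t.1) by norm_num,
      abs_neg, abs_of_nonneg (by linarith [t.2.2] : (0:ℝ) ≤ 1 - t.1)]
  exact starF_between p q (γ t) t.2.1 t.2.2 e1 e2


/-- On the star with countably many branches with the metric `d₁`, the
function `f [x,n] = x` is not continuous at the origin: the tips `[1, p]` converge to the
origin (at distance `1/p`) while `f` equals `1` on them and `0` at the origin. Hence on
the compact geodesic space `(M, d₁)` there is a geodesically convex real-valued function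
that is not continuous. -/
theorem starF_not_continuous_d1 :
    (∀ p : ℕ, dist (starTip p) StarSpace.origin = 1 / ((p : ℝ) + 1)) ∧
    Filter.Tendsto starTip Filter.atTop (nhds StarSpace.origin) ∧
    (∀ p : ℕ, starF (starTip p) = 1) ∧
    starF StarSpace.origin = 0 ∧
    ¬ ContinuousAt starF StarSpace.origin ∧
    (CompactSpace StarSpace ∧
      (∀ p q : StarSpace, ∃ γ : Set.Icc (0:ℝ) 1 → StarSpace, IsGeodesic p q γ) ∧
      ∃ h : StarSpace → ℝ, GeodesicallyConvexReal h ∧ ¬ Continuous h) := by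
  have hdist : ∀ p : ℕ, dist (starTip p) StarSpace.origin = 1 / ((p : ℝ) + 1) := by
    intro p
    rw [starTip, dist_mk_origin]
    push_cast
    norm_num
  have htend : Filter.Tendsto starTip Filter.atTop (nhds StarSpace.origin) := by
    rw [tendsto_iff_dist_tendsto_zero]
    simp only [hdist]
    exact tendsto_one_div_add_atTop_nhds_zero_nat
  have hnotCont : ¬ ContinuousAt starF StarSpace.origin := by
    intro h
    have hcomp : Filter.Tendsto (starF ∘ starTip) Filter.atTop (nhds 0) :=
      (h.tendsto).comp htend
    have : Filter.Tendsto (fun _ : ℕ => (1:ℝ)) Filter.atTop (nhds 0) := hcomp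
    have h10 : (0:ℝ) = 1 := tendsto_nhds_unique this tendsto_const_nhds
    norm_num at h10
  refine ⟨hdist, htend, fun p => rfl, rfl, hnotCont, inferInstance, ?_, starF,
    starF_geodesicallyConvex, fun hc => hnotCont hc.continuousAt⟩
  intro p q
  induction p, q using Quotient.inductionOn₂ with
  | h a b => exact exists_geodesic_mk a b
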